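/- Let M > 0, Λ ∈ ℝ, ℓ ≥ 2 an integer, and suppose r_h > 0 satisfies f(r_h) = 0 and f'(r_h) > 0, with f > 0 and μr + 6M > 0 on (r_h, r₀) for some r₀ > r_h. Let φ : ℝ × (r_h, r₀) → ℝ be C², satisfying on ℝ × (r_h, r₀) both the Regge–Wheeler equation ∂_t²φ − f∂_r(f∂_rφ) + f·(ℓ(ℓ+1)/r² − 6M/r³)·φ = 0 and the first-order equation f∂_rφ + Wφ = 0, and suppose that for each t the integral ∫_{r_h}^{r₀} φ(t, r)²/f(r) dr is finite. Then φ is identically zero. -/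

import Mathlib

open MeasureTheory

/-- The wave operator `∂_t²φ - f ∂_r(f ∂_r φ) + f V φ` acting on a function
`φ(t, r)`, in Schwarzschild-type coordinates (`∂_{r*} = f ∂_r`). -/
noncomputable def waveOp (f V : ℝ → ℝ) (φ : ℝ → ℝ → ℝ) (t r : ℝ) : ℝ :=
  deriv (deriv (fun t' => φ t' r)) t
    - f r * deriv (fun r' => f r' * deriv (fun r'' => φ t r'') r') r
    + f r * V r * φ t r

/-- Injectivity of the Chandrasekhar operator `D⁺ = f∂_r + W` on Regge-Wheeler
solutions with time slices that are `L²` with respect to the tortoise measure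
`dr/f` near a simple horizon (`f(r_h) = 0`, `f'(r_h) > 0`): such a solution
annihilated by `D⁺` vanishes identically. -/
theorem stmt_15 (M Λ : ℝ) (hM : 0 < M) (ℓ : ℕ) (hℓ : 2 ≤ ℓ) (rh r0 : ℝ)
    (hrh : 0 < rh) (hr0 : rh < r0)
    (hroot : 1 - 2 * M / rh - Λ * rh ^ 2 / 3 = 0)
    (hder : 0 < deriv (fun r : ℝ => 1 - 2 * M / r - Λ * r ^ 2 / 3) rh) :
    let μ : ℝ := ((ℓ : ℝ) - 1) * ((ℓ : ℝ) + 2)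
    let w : ℝ := ((ℓ : ℝ) - 1) * (ℓ : ℝ) * ((ℓ : ℝ) + 1) * ((ℓ : ℝ) + 2) / (12 * M)
    let f : ℝ → ℝ := fun r => 1 - 2 * M / r - Λ * r ^ 2 / 3
    let W : ℝ → ℝ := fun r => w + 6 * M * f r / (r * (μ * r + 6 * M))
    let VRW : ℝ → ℝ := fun r => (ℓ : ℝ) * ((ℓ : ℝ) + 1) / r ^ 2 - 6 * M / r ^ 3
    (∀ r ∈ Set.Ioo rh r0, 0 < f r) →
    (∀ r ∈ Set.Ioo rh r0, 0 < μ * r + 6 * M) →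
    ∀ φ : ℝ → ℝ → ℝ,
      ContDiffOn ℝ 2 (fun p : ℝ × ℝ => φ p.1 p.2) (Set.univ ×ˢ Set.Ioo rh r0) →
      (∀ t : ℝ, ∀ r ∈ Set.Ioo rh r0, waveOp f VRW φ t r = 0) →
      (∀ t : ℝ, ∀ r ∈ Set.Ioo rh r0,
        f r * deriv (fun s => φ t s) r + W r * φ t r = 0) →
      (∀ t : ℝ, IntegrableOn (fun r => (φ t r) ^ 2 / f r) (Set.Ioo rh r0)) →
      ∀ t : ℝ, ∀ r ∈ Set.Ioo rh r0, φ t r = 0 := by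
  intro μ w f W VRW hfpos hmupos φ hφ hwave hfirst hL2 t r₁ hr₁
  by_contra hne
  have hl2 : (2:ℝ) ≤ (ℓ:ℝ) := by exact_mod_cast hℓ
  -- positivity of w and W
  have hw : 0 < w := by
    have h1 : 0 < (ℓ:ℝ) - 1 := by linarith
    have h2 : 0 < (ℓ:ℝ) := by linarith
    have h3 : 0 < (ℓ:ℝ) + 1 := by linarith
    have h4 : 0 < (ℓ:ℝ) + 2 := by linarith
    exact div_pos (by positivity) (by positivity)
  have hWpos : ∀ r ∈ Set.Ioo rh r0, 0 < W r := by
    intro r hr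
    have h1 := hfpos r hr
    have h2 := hmupos r hr
    have h3 : 0 < r := lt_trans hrh hr.1
    have : 0 < 6 * M * f r / (r * (μ * r + 6 * M)) := by positivity
    show 0 < w + 6 * M * f r / (r * (μ * r + 6 * M))
    linarith
  -- smoothness of the time slice
  have hslice : ContDiffOn ℝ 2 (fun r => φ t r) (Set.Ioo rh r0) := by
    have hin : ContDiff ℝ 2 (fun r : ℝ => ((t, r) : ℝ × ℝ)) := contDiff_const.prodMk contDiff_id
    exact hφ.comp hin.contDiffOn (fun r hr => ⟨Set.mem_univ _, hr⟩)
  have hdiff : ∀ r ∈ Set.Ioo rh r0, DifferentiableAt ℝ (fun s => φ t s) r := by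
    intro r hr
    exact (hslice.differentiableOn (by norm_num)).differentiableAt (isOpen_Ioo.mem_nhds hr)
  -- derivative from the first-order equation
  have hderiv : ∀ r ∈ Set.Ioo rh r0,
      deriv (fun s => φ t s) r = -(W r / f r) * φ t r := by
    intro r hr
    have h1 := hfirst t r hr
    have h2 : f r ≠ 0 := (hfpos r hr).ne'
    field_simp
    linarith
  -- the square is antitone
  have hanti : AntitoneOn (fun r => (φ t r) ^ 2) (Set.Ioo rh r0) := by
    apply antitoneOn_of_deriv_nonpos (convex_Ioo _ _)
    · exact ((hslice.continuousOn).pow 2)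
    · rw [interior_Ioo]
      intro r hr
      exact ((hdiff r hr).pow 2).differentiableWithinAt
    · rw [interior_Ioo]
      intro r hr
      have hd := (hdiff r hr).hasDerivAt
      have hg : HasDerivAt (fun s => (φ t s) ^ 2) (2 * φ t r ^ 1 * deriv (fun s => φ t s) r) r :=
        hd.pow 2
      rw [hg.deriv, hderiv r hr]
      have h1 := (hWpos r hr).le
      have h2 := (hfpos r hr).le
      have h3 : 0 ≤ W r / f r := div_nonneg h1 h2
      nlinarith [sq_nonneg (φ t r)]
  set c : ℝ := (φ t r₁) ^ 2 with hc
  have hcpos : 0 < c := pow_two_pos_of_ne_zero hne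
  -- f is differentiable at rh with derivative K > 0
  set K : ℝ := deriv (fun r : ℝ => 1 - 2 * M / r - Λ * r ^ 2 / 3) rh with hK
  have hKpos : 0 < K := hder
  have hfd : DifferentiableAt ℝ f rh := by
    have : DifferentiableAt ℝ (fun r : ℝ => 1 - 2 * M / r - Λ * r ^ 2 / 3) rh := by
      apply DifferentiableAt.sub
      apply DifferentiableAt.sub
      · exact differentiableAt_const _
      · exact (differentiableAt_const _).div differentiableAt_fun_id hrh.ne'
      · exact (differentiableAt_pow 2).const_mul Λ |>.div_const 3
    exact this
  have hdrv : HasDerivAt f K rh := hfd.hasDerivAt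
  -- eventually f r < 2K (r - rh) to the right of rh
  have hslope : ∀ᶠ y in nhdsWithin rh (Set.Ioi rh), slope f rh y < 2 * K := by
    have h1 : Filter.Tendsto (slope f rh) (nhdsWithin rh (Set.Ioi rh)) (nhds K) := by
      refine (hasDerivAt_iff_tendsto_slope.mp hdrv).mono_left (nhdsWithin_mono rh ?_)
      intro y hy
      exact (ne_of_gt hy)
    exact h1.eventually_lt_const (by linarith)
  obtain ⟨u, hu, hsub⟩ := mem_nhdsGT_iff_exists_Ioo_subset.mp hslope
  set b : ℝ := min u r₁ with hbdef
  have hbrh : rh < b := lt_min hu hr₁.1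
  have hbr₁ : b ≤ r₁ := min_le_right _ _
  have hbound : ∀ r ∈ Set.Ioo rh b, f r < 2 * K * (r - rh) := by
    intro r hr
    have hru : r ∈ Set.Ioo rh u := ⟨hr.1, lt_of_lt_of_le hr.2 (min_le_left _ _)⟩
    have := hsub hru
    have hfr0 : f rh = 0 := hroot
    have hrrh : 0 < r - rh := sub_pos.mpr hr.1
    rw [Set.mem_setOf_eq, slope_def_field, hfr0, sub_zero, div_lt_iff₀ hrrh] at this
    linarith [this]
  -- the lower bound on the slice
  have hIooSub : Set.Ioo rh b ⊆ Set.Ioo rh r0 := by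
    intro r hr
    exact ⟨hr.1, lt_of_lt_of_le hr.2 (le_trans hbr₁ hr₁.2.le)⟩
  have hlow : ∀ r ∈ Set.Ioo rh b, c / (2 * K) * (r - rh)⁻¹ ≤ (φ t r) ^ 2 / f r := by
    intro r hr
    have hr' : r ∈ Set.Ioo rh r0 := hIooSub hr
    have hfr := hfpos r hr'
    have hrrh : 0 < r - rh := sub_pos.mpr hr.1
    have h1 : c ≤ (φ t r) ^ 2 := hanti hr' hr₁ (le_trans hr.2.le hbr₁)
    have h2 : c / (2 * K * (r - rh)) ≤ c / f r := by
      apply div_le_div_of_nonneg_left hcpos.le hfr (hbound r hr).le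
    have h3 : c / f r ≤ (φ t r) ^ 2 / f r := by
      exact div_le_div_of_nonneg_right h1 hfr.le
    calc c / (2 * K) * (r - rh)⁻¹ = c / (2 * K * (r - rh)) := by
          rw [eq_div_iff (by positivity : (2 * K * (r - rh)) ≠ 0)]
          field_simp
      _ ≤ c / f r := h2
      _ ≤ (φ t r) ^ 2 / f r := h3
  -- integrability transfer
  have hint : IntegrableOn (fun r => (φ t r) ^ 2 / f r) (Set.Ioo rh b) :=
    (hL2 t).mono_set hIooSub
  have hint2 : IntegrableOn (fun r => c / (2 * K) * (r - rh)⁻¹) (Set.Ioo rh b) := by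
    apply Integrable.mono' hint
    · exact ((measurable_id.sub_const rh).inv.const_mul _).aestronglyMeasurable
    · filter_upwards [ae_restrict_mem measurableSet_Ioo] with r hr
      have hrrh : 0 < r - rh := sub_pos.mpr hr.1
      have : 0 ≤ c / (2 * K) * (r - rh)⁻¹ := by positivity
      rw [Real.norm_eq_abs, abs_of_nonneg this]
      exact hlow r hr
  have hint3 : IntegrableOn (fun r => (r - rh)⁻¹) (Set.Ioo rh b) := by
    have := hint2.const_mul (2 * K / c)
    have hone : 2 * K / c * (c / (2 * K)) = 1 := by
      field_simp
    simpa [← mul_assoc, hone, IntegrableOn] using this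
  -- contradiction with non-integrability of (r - rh)⁻¹
  have hivl : IntervalIntegrable (fun r => (r - rh)⁻¹) volume rh b := by
    rw [intervalIntegrable_iff_integrableOn_Ioc_of_le hbrh.le]
    rwa [integrableOn_Ioc_iff_integrableOn_Ioo]
  rw [intervalIntegrable_sub_inv_iff] at hivl
  rcases hivl with h | h
  · exact absurd h hbrh.ne
  · exact h (Set.left_mem_uIcc)
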